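/- (Bernstein ellipse extrapolation bound) Let R > 1 and E_R be the open Bernstein ellipse with foci ±1 (image of the disk of radius R under the Joukowski map J(ζ) = (ζ+ζ⁻¹)/2). Let z ∈ E_R \ [-1,1] and define α(z) = 1 - ln|J⁻¹(z)|/ln R, where J⁻¹ is the branch of the inverse Joukowski map with 1 < |J⁻¹(ζ)| < R on E_R \ [-1,1]. Then α(z) ∈ (0,1), and there exists C > 0 such that for every ε > 0 and every bounded analytic F on E_R with sup_{E_R}|F| ≤ 1 and sup_{x∈[-1,1]}|F(x)| ≤ ε, one has |F(z)| ≤ C ε^{α(z)}. -/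

import Mathlib

/-- The open Bernstein ellipse `E_R`, the image of `{1 ≤ |ζ| < R}` under the
Joukowski map `J(ζ) = (ζ + ζ⁻¹)/2`. -/
noncomputable def BernsteinEllipse (R : ℝ) : Set ℂ :=
  (fun ζ : ℂ => (ζ + ζ⁻¹) / 2) '' {ζ : ℂ | 1 ≤ ‖ζ‖ ∧ ‖ζ‖ < R}

/-- The exterior branch of the inverse Joukowski map:
`J⁻¹(z) = z + (z-1)√((z+1)/(z-1))`. -/
noncomputable def Jinv (z : ℂ) : ℂ := z + (z - 1) * ((z + 1) / (z - 1)) ^ ((1 : ℂ) / 2)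

/-- The extrapolation exponent `α(z) = 1 - ln|J⁻¹(z)|/ln R`. -/
noncomputable def alphaEll (R : ℝ) (z : ℂ) : ℝ :=
  1 - Real.log ‖Jinv z‖ / Real.log R

open Complex Complex.HadamardThreeLines Set

lemma not_neg_real {z : ℂ} (hz2 : ¬(z.im = 0 ∧ -1 ≤ z.re ∧ z.re ≤ 1)) (hz1 : z ≠ 1) :
    ¬(((z + 1) / (z - 1)).re < 0 ∧ ((z + 1) / (z - 1)).im = 0) := by
  rintro ⟨hre, him⟩
  set x := (z + 1) / (z - 1) with hxdef
  set t := x.re with htdef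
  have hz1' : z - 1 ≠ 0 := sub_ne_zero.mpr hz1
  have hx : x = (t : ℂ) := Complex.ext rfl (by simpa using him)
  have hxz : z + 1 = (t : ℂ) * (z - 1) := by
    rw [← hx, hxdef, div_mul_cancel₀ _ hz1']
  have ht1 : (t : ℂ) - 1 ≠ 0 := by
    intro h
    rw [sub_eq_zero] at h
    have : t = 1 := by exact_mod_cast h
    linarith
  have hzval : z = (((t + 1) / (t - 1) : ℝ) : ℂ) := by
    push_cast
    field_simp
    linear_combination -hxz
  have him0 : z.im = 0 := by rw [hzval]; exact Complex.ofReal_im _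
  have hre0 : z.re = (t + 1) / (t - 1) := by rw [hzval]; exact Complex.ofReal_re _
  have htlt : t - 1 < 0 := by linarith
  have h1 : (t + 1) / (t - 1) ≤ 1 := by
    rw [div_le_one_of_neg] <;> linarith
  have h2 : -1 ≤ (t + 1) / (t - 1) := by
    rw [le_div_iff_of_neg htlt]; linarith
  exact hz2 ⟨him0, by rw [hre0]; exact ⟨h2, h1⟩⟩

lemma sqrt_re_pos {x : ℂ} (hx : x ≠ 0) (hnn : ¬(x.re < 0 ∧ x.im = 0)) :
    0 < (x ^ ((1 : ℂ) / 2)).re := by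
  rw [Complex.cpow_def_of_ne_zero hx, Complex.exp_re]
  apply mul_pos (Real.exp_pos _)
  have him : (Complex.log x * ((1 : ℂ) / 2)).im = x.arg / 2 := by
    simp [Complex.log_im]
    ring
  rw [him]
  apply Real.cos_pos_of_mem_Ioo
  have h1 : -Real.pi < x.arg := Complex.neg_pi_lt_arg x
  have h2 : x.arg ≠ Real.pi := by
    intro h
    exact hnn (Complex.arg_eq_pi_iff.mp h)
  have h3 : x.arg ≤ Real.pi := Complex.arg_le_pi x
  have hpi : 0 < Real.pi := Real.pi_pos
  constructor
  · nlinarith [h3.lt_of_ne h2]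
  · nlinarith [h3.lt_of_ne h2]

lemma Jinv_spec {z : ℂ} (hz2 : ¬(z.im = 0 ∧ -1 ≤ z.re ∧ z.re ≤ 1)) :
    (Jinv z + (Jinv z)⁻¹) / 2 = z ∧ 1 < ‖Jinv z‖ := by
  have hz1 : z ≠ 1 := by
    intro h; exact hz2 (by simp [h])
  have hzm1 : z ≠ -1 := by
    intro h; apply hz2; rw [h]; norm_num
  have hz1' : z - 1 ≠ 0 := sub_ne_zero.mpr hz1
  have hzm1' : z + 1 ≠ 0 := by
    intro h; exact hzm1 (by linear_combination h)
  set x := (z + 1) / (z - 1) with hxdef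
  have hx0 : x ≠ 0 := div_ne_zero hzm1' hz1'
  set w := x ^ ((1 : ℂ) / 2) with hwdef
  have hw2 : w ^ 2 = x := by
    have e : ((1 : ℂ)/2) = (((2 : ℕ)) : ℂ)⁻¹ := by norm_num
    rw [hwdef, e]
    exact_mod_cast Complex.cpow_nat_inv_pow x two_ne_zero
  have hwre : 0 < w.re := sqrt_re_pos hx0 (not_neg_real hz2 hz1)
  have key : (z - 1) * w ^ 2 = z + 1 := by
    rw [hw2, hxdef, mul_div_cancel₀ _ hz1']
  have hJ : Jinv z = (z - 1) * (w + 1) ^ 2 / 2 := by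
    unfold Jinv
    rw [← hwdef]
    linear_combination (-1/2 : ℂ) * key
  set ζ' := (z - 1) * (w - 1) ^ 2 / 2 with hζ'def
  have prod : Jinv z * ζ' = 1 := by
    rw [hJ, hζ'def]
    linear_combination (((z-1) * w^2 - z + 3)/4) * key
  have habslt : ‖w - 1‖ < ‖w + 1‖ := by
    apply lt_of_pow_lt_pow_left₀ 2 (norm_nonneg _)
    rw [Complex.sq_norm, Complex.sq_norm]
    simp only [Complex.normSq_apply, Complex.add_re, Complex.add_im, Complex.sub_re,
      Complex.sub_im, Complex.one_re, Complex.one_im]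
    nlinarith
  have habs : ‖ζ'‖ < ‖Jinv z‖ := by
    rw [hJ, hζ'def]
    simp only [norm_div, norm_mul, norm_pow]
    have h1 : 0 < ‖z - 1‖ := by
      exact norm_pos_iff.mpr hz1'
    have h2 : ‖(2 : ℂ)‖ = 2 := by norm_num
    rw [h2]
    have hsq : ‖w - 1‖ ^ 2 < ‖w + 1‖ ^ 2 := by
      nlinarith [norm_nonneg (w - 1), norm_nonneg (w + 1)]
    have := mul_lt_mul_of_pos_left hsq h1
    linarith
  have hone : ‖Jinv z‖ * ‖ζ'‖ = 1 := by
    rw [← norm_mul, prod, norm_one]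
  have hgt1 : 1 < ‖Jinv z‖ := by
    nlinarith [norm_nonneg ζ', norm_nonneg (Jinv z)]
  have hJne : Jinv z ≠ 0 := by
    intro h
    rw [h, norm_zero] at hgt1; linarith
  have hinv : (Jinv z)⁻¹ = ζ' := (eq_inv_of_mul_eq_one_right prod).symm
  refine ⟨?_, hgt1⟩
  rw [hinv, hJ, hζ'def]
  linear_combination (1/2 : ℂ) * key

lemma hadamard_ann {R : ℝ} (F : ℂ → ℂ)
    (hFd : DifferentiableOn ℂ F (BernsteinEllipse R))
    (hF1 : ∀ w ∈ BernsteinEllipse R, ‖F w‖ ≤ 1)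
    {r R' : ℝ} (hr : 1 < r) (hR' : R' < R) (hrR' : r < R')
    {ζ₁ : ℂ} (hζ₁ : r ≤ ‖ζ₁‖) (hζ₁' : ‖ζ₁‖ ≤ R')
    {M : ℝ}
    (hM : ∀ ζ : ℂ, ‖ζ‖ = r → ‖F ((ζ + ζ⁻¹) / 2)‖ ≤ M) :
    ‖F ((ζ₁ + ζ₁⁻¹) / 2)‖ ≤
      M ^ (1 - (Real.log (‖ζ₁‖) - Real.log r) / (Real.log R' - Real.log r)) *
      1 ^ ((Real.log (‖ζ₁‖) - Real.log r) / (Real.log R' - Real.log r)) := by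
  set a := Real.log r with ha
  set b := Real.log R' with hb
  have hr0 : (0 : ℝ) < r := by linarith
  have hR'0 : (0 : ℝ) < R' := by linarith
  have h0a : 0 < a := Real.log_pos hr
  have hab : a < b := Real.log_lt_log hr0 hrR'
  set ζfun : ℂ → ℂ := fun w => Complex.exp ((a : ℂ) + w * ((b : ℂ) - (a : ℂ))) with hζfun
  have habsζ : ∀ w : ℂ, ‖ζfun w‖ = Real.exp (a + w.re * (b - a)) := by
    intro w
    rw [hζfun]
    simp only [Complex.norm_exp, Complex.add_re, Complex.mul_re, Complex.sub_re,
      Complex.ofReal_re, Complex.ofReal_im, Complex.sub_im, mul_zero, sub_zero]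
  set g : ℂ → ℂ := fun w => F ((ζfun w + (ζfun w)⁻¹) / 2) with hg
  have hmaps : ∀ w ∈ verticalClosedStrip 0 1, (ζfun w + (ζfun w)⁻¹) / 2 ∈ BernsteinEllipse R := by
    intro w hw
    refine ⟨ζfun w, ⟨?_, ?_⟩, rfl⟩
    · rw [habsζ w]
      have h1 : 0 ≤ a + w.re * (b - a) := by nlinarith [hw.1, hw.2]
      calc (1 : ℝ) = Real.exp 0 := by rw [Real.exp_zero]
        _ ≤ _ := Real.exp_le_exp.mpr h1
    · rw [habsζ w]
      have h1 : a + w.re * (b - a) ≤ b := by nlinarith [hw.1, hw.2]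
      calc Real.exp (a + w.re * (b - a)) ≤ Real.exp b := Real.exp_le_exp.mpr h1
        _ = R' := Real.exp_log hR'0
        _ < R := hR'
  have hζd : Differentiable ℂ (fun w => (ζfun w + (ζfun w)⁻¹) / 2) := by
    have h1 : Differentiable ℂ ζfun := by
      rw [hζfun]
      exact Complex.differentiable_exp.comp (by fun_prop)
    exact ((h1.add (h1.inv (fun w => Complex.exp_ne_zero _))).div_const 2)
  have hgd : DifferentiableOn ℂ g (verticalClosedStrip 0 1) :=
    hFd.comp hζd.differentiableOn hmaps
  have hcl : closure (verticalStrip 0 1) ⊆ verticalClosedStrip 0 1 := by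
    rw [verticalClosedStrip, ← closure_Ioo zero_ne_one, ← Complex.closure_preimage_re]
    exact closure_mono subset_rfl
  have hd : DiffContOnCl ℂ g (verticalStrip 0 1) :=
    ⟨hgd.mono (fun w hw => ⟨le_of_lt hw.1, le_of_lt hw.2⟩),
     (hgd.continuousOn).mono hcl⟩
  have hB : BddAbove ((norm ∘ g) '' verticalClosedStrip 0 1) := by
    refine ⟨1, ?_⟩
    rintro y ⟨w, hw, rfl⟩
    exact hF1 _ (hmaps w hw)
  have edge0 : ∀ u ∈ Complex.re ⁻¹' {0}, ‖g u‖ ≤ M := by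
    intro u hu
    apply hM
    rw [habsζ u]
    simp only [Set.mem_preimage, Set.mem_singleton_iff] at hu
    rw [hu]
    simp [ha, Real.exp_log hr0]
  have edge1 : ∀ u ∈ Complex.re ⁻¹' {1}, ‖g u‖ ≤ 1 := by
    intro u hu
    apply hF1
    refine ⟨ζfun u, ⟨?_, ?_⟩, rfl⟩
    · rw [habsζ u]
      simp only [Set.mem_preimage, Set.mem_singleton_iff] at hu
      rw [hu, one_mul]
      have : a + (b - a) = b := by ring
      rw [this, Real.exp_log hR'0]
      linarith
    · rw [habsζ u]
      simp only [Set.mem_preimage, Set.mem_singleton_iff] at hu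
      rw [hu, one_mul]
      have : a + (b - a) = b := by ring
      rw [this, Real.exp_log hR'0]
      exact hR'
  have hζ₁ne : ζ₁ ≠ 0 := by
    intro h
    rw [h, norm_zero] at hζ₁
    linarith
  have hbane : ((b : ℂ) - (a : ℂ)) ≠ 0 := by
    rw [← Complex.ofReal_sub, Complex.ofReal_ne_zero]
    exact ne_of_gt (by linarith)
  set w₀ : ℂ := (Complex.log ζ₁ - (a : ℂ)) / ((b : ℂ) - (a : ℂ)) with hw₀
  have hw₀re : w₀.re = (Real.log (‖ζ₁‖) - a) / (b - a) := by
    rw [hw₀, ← Complex.ofReal_sub, Complex.div_ofReal_re, Complex.sub_re, Complex.log_re,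
      Complex.ofReal_re]
  have hlog₁ : a ≤ Real.log (‖ζ₁‖) := Real.log_le_log hr0 hζ₁
  have hlog₂ : Real.log (‖ζ₁‖) ≤ b := Real.log_le_log (by linarith) hζ₁'
  have hw₀strip : w₀ ∈ verticalClosedStrip 0 1 := by
    constructor
    · rw [hw₀re]
      apply div_nonneg (by linarith) (by linarith)
    · rw [hw₀re]
      apply div_le_one_of_le₀ (by linarith) (by linarith)
  have hζw₀ : ζfun w₀ = ζ₁ := by
    rw [hζfun]
    simp only
    rw [hw₀, div_mul_cancel₀ _ hbane]
    have : (a : ℂ) + (Complex.log ζ₁ - (a : ℂ)) = Complex.log ζ₁ := by ring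
    rw [this, Complex.exp_log hζ₁ne]
  have main := norm_le_interp_of_mem_verticalClosedStrip' zero_lt_one hw₀strip hd hB edge0 edge1
  rw [hg] at main
  simp only [sub_zero, div_one] at main
  rw [hζw₀, hw₀re] at main
  exact main

lemma near_circle_bound {R : ℝ} (hR : 1 < R) (F : ℂ → ℂ)
    (hFd : DifferentiableOn ℂ F (BernsteinEllipse R))
    {ε : ℝ} (hε : ∀ x : ℝ, -1 ≤ x → x ≤ 1 → ‖F (x : ℂ)‖ ≤ ε)
    {δ : ℝ} (hδ : 0 < δ) :
    ∃ η > 0, (1 + η < R ∧ ∀ ζ : ℂ, 1 ≤ ‖ζ‖ → ‖ζ‖ ≤ 1 + η →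
      ‖F ((ζ + ζ⁻¹) / 2)‖ ≤ ε + δ) := by
  set ρ : ℝ := (1 + R) / 2 with hρ
  have hρ1 : 1 < ρ := by rw [hρ]; linarith
  have hρR : ρ < R := by rw [hρ]; linarith
  set K : Set ℂ := (norm : ℂ → ℝ) ⁻¹' (Icc 1 ρ) with hK
  have hKc : IsCompact K := by
    apply (isCompact_closedBall (0 : ℂ) ρ).of_isClosed_subset
    · exact IsClosed.preimage continuous_norm isClosed_Icc
    · intro ζ hζ
      simp only [Metric.mem_closedBall, dist_zero_right]
      exact hζ.2
  have hKne : ∀ ζ ∈ K, ζ ≠ 0 := by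
    intro ζ hζ h0
    rw [h0] at hζ
    simp [hK] at hζ
    linarith [hζ.1]
  have hKmaps : ∀ ζ ∈ K, (ζ + ζ⁻¹) / 2 ∈ BernsteinEllipse R := by
    intro ζ hζ
    exact ⟨ζ, ⟨hζ.1, lt_of_le_of_lt hζ.2 hρR⟩, rfl⟩
  have hcont : ContinuousOn (fun ζ : ℂ => F ((ζ + ζ⁻¹) / 2)) K := by
    apply hFd.continuousOn.comp
    · exact ((continuousOn_id.add (continuousOn_id.inv₀ hKne)).div_const 2)
    · exact hKmaps
  have hunif := hKc.uniformContinuousOn_of_continuous hcont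
  rw [Metric.uniformContinuousOn_iff] at hunif
  obtain ⟨η', hη'0, hη'⟩ := hunif δ hδ
  refine ⟨min (η' / 2) ((ρ - 1) / 2), lt_min (by linarith) (by linarith), ?_, ?_⟩
  · have : min (η' / 2) ((ρ - 1) / 2) ≤ (ρ - 1) / 2 := min_le_right _ _
    linarith
  intro ζ h1 h2
  set c : ℝ := ‖ζ‖ with hc
  have hc1 : 1 ≤ c := h1
  have hcρ : c ≤ ρ := by
    have : min (η' / 2) ((ρ - 1) / 2) ≤ (ρ - 1) / 2 := min_le_right _ _
    linarith
  have hcη : c ≤ 1 + η' / 2 := by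
    have : min (η' / 2) ((ρ - 1) / 2) ≤ η' / 2 := min_le_left _ _
    linarith
  have hc0 : (0 : ℝ) < c := by linarith
  have hζ0 : ζ ≠ 0 := by
    intro h
    rw [hc, h, norm_zero] at hc0
    exact lt_irrefl _ hc0
  set ζ' : ℂ := ζ / (c : ℂ) with hζ'
  have hζ'abs : ‖ζ'‖ = 1 := by
    rw [hζ', norm_div, Complex.norm_real, Real.norm_eq_abs, ← hc, abs_of_pos hc0, div_self (ne_of_gt hc0)]
  have hζK : ζ ∈ K := ⟨hc1, hcρ⟩
  have hζ'K : ζ' ∈ K := ⟨le_of_eq hζ'abs.symm, by rw [hζ'abs]; linarith⟩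
  have hdist : dist ζ ζ' < η' := by
    rw [Complex.dist_eq]
    have hcc : (c : ℂ) ≠ 0 := Complex.ofReal_ne_zero.mpr (ne_of_gt hc0)
    have he : ζ - ζ' = ζ * ((c : ℂ) - 1) / (c : ℂ) := by
      rw [hζ']
      field_simp
    rw [he, norm_div, norm_mul]
    have h3 : ‖(c : ℂ) - 1‖ = c - 1 := by
      rw [show ((c : ℂ) - 1) = ((c - 1 : ℝ) : ℂ) by push_cast; ring, Complex.norm_real, Real.norm_eq_abs]
      exact abs_of_nonneg (by linarith)
    rw [h3, Complex.norm_real, Real.norm_eq_abs, abs_of_pos hc0, ← hc]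
    rw [mul_comm, mul_div_assoc, div_self (ne_of_gt hc0), mul_one]
    linarith
  have hFd' := hη' ζ hζK ζ' hζ'K hdist
  have hre : (ζ' + ζ'⁻¹) / 2 = ((ζ'.re : ℝ) : ℂ) := by
    have hinv : ζ'⁻¹ = starRingEnd ℂ ζ' := by
      rw [Complex.inv_def]
      have : Complex.normSq ζ' = 1 := by
        rw [← Complex.sq_norm, hζ'abs]; norm_num
      rw [this]
      simp
    rw [hinv, Complex.add_conj]
    push_cast
    ring
  have hFζ' : ‖F ((ζ' + ζ'⁻¹) / 2)‖ ≤ ε := by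
    rw [hre]
    apply hε
    · have := Complex.abs_re_le_norm ζ'
      rw [hζ'abs] at this
      cases' abs_le.mp this with h _
      exact h
    · have := Complex.abs_re_le_norm ζ'
      rw [hζ'abs] at this
      exact (abs_le.mp this).2
  have : ‖F ((ζ + ζ⁻¹) / 2)‖ - ‖F ((ζ' + ζ'⁻¹) / 2)‖ ≤
      dist (F ((ζ + ζ⁻¹) / 2)) (F ((ζ' + ζ'⁻¹) / 2)) := by
    rw [dist_eq_norm]
    exact norm_sub_norm_le _ _
  linarith

/-- Bernstein ellipse extrapolation bound: for `z ∈ E_R \ [-1,1]`,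
`α(z) ∈ (0,1)`, and any `F` analytic and bounded by `1` on `E_R` with `|F| ≤ ε`
on `[-1,1]` satisfies `|F(z)| ≤ C ε^{α(z)}` with `C` independent of `ε, F`. -/
theorem stmt19 (R : ℝ) (hR : 1 < R) (z : ℂ) (hz : z ∈ BernsteinEllipse R)
    (hz2 : ¬(z.im = 0 ∧ -1 ≤ z.re ∧ z.re ≤ 1)) :
    (0 < alphaEll R z ∧ alphaEll R z < 1) ∧
    ∃ C : ℝ, 0 < C ∧ ∀ ε : ℝ, 0 < ε → ∀ F : ℂ → ℂ,
      DifferentiableOn ℂ F (BernsteinEllipse R) →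
      (∀ w ∈ BernsteinEllipse R, ‖F w‖ ≤ 1) →
      (∀ x : ℝ, -1 ≤ x → x ≤ 1 → ‖F (x : ℂ)‖ ≤ ε) →
      ‖F z‖ ≤ C * ε ^ alphaEll R z := by
  obtain ⟨hJz, hs1⟩ := Jinv_spec hz2
  set s : ℝ := ‖Jinv z‖ with hs
  have hJne : Jinv z ≠ 0 := by
    intro h
    rw [hs, h, norm_zero] at hs1
    linarith
  -- s < R via root identification
  have hsR : s < R := by
    obtain ⟨ζ₀, ⟨hζ₀1, hζ₀R⟩, hζ₀⟩ := hz
    have hζ₀ne : ζ₀ ≠ 0 := by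
      intro h
      rw [h, norm_zero] at hζ₀1
      linarith
    have h1 : Jinv z + (Jinv z)⁻¹ = 2 * z := by linear_combination 2 * hJz
    have h2 : Jinv z * (Jinv z)⁻¹ = 1 := mul_inv_cancel₀ hJne
    have h3 : ζ₀ + ζ₀⁻¹ = 2 * z := by linear_combination 2 * hζ₀
    have h4 : ζ₀ * ζ₀⁻¹ = 1 := mul_inv_cancel₀ hζ₀ne
    have e1 : Jinv z ^ 2 + 1 = 2 * z * Jinv z := by
      linear_combination Jinv z * h1 - h2
    have hq : (Jinv z - ζ₀) * (Jinv z - ζ₀⁻¹) = 0 := by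
      linear_combination e1 - Jinv z * h3 + h4
    rcases mul_eq_zero.mp hq with hcase | hcase
    · rw [hs, sub_eq_zero.mp hcase]
      exact hζ₀R
    · exfalso
      have : s = (‖ζ₀‖)⁻¹ := by
        rw [hs, sub_eq_zero.mp hcase, norm_inv]
      rw [this] at hs1
      have : (‖ζ₀‖)⁻¹ ≤ 1 := inv_le_one_of_one_le₀ hζ₀1
      linarith
  have hs0 : (0 : ℝ) < s := by linarith
  set ls : ℝ := Real.log s with hls
  set lR : ℝ := Real.log R with hlR
  have hls0 : 0 < ls := Real.log_pos hs1
  have hlR0 : 0 < lR := Real.log_pos hR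
  have hlslR : ls < lR := Real.log_lt_log hs0 hsR
  have halpha : alphaEll R z = 1 - ls / lR := rfl
  have hα0 : 0 < alphaEll R z := by
    rw [halpha]
    have : ls / lR < 1 := (div_lt_one hlR0).mpr hlslR
    linarith
  have hα1 : alphaEll R z < 1 := by
    rw [halpha]
    have : 0 < ls / lR := div_pos hls0 hlR0
    linarith
  refine ⟨⟨hα0, hα1⟩, 1, one_pos, ?_⟩
  intro ε hε F hFd hF1 hFε
  rw [one_mul]
  by_cases hε1 : 1 ≤ ε
  · calc ‖F z‖ ≤ 1 := hF1 z hz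
      _ = ε ^ (0 : ℝ) := by rw [Real.rpow_zero]
      _ ≤ ε ^ alphaEll R z := Real.rpow_le_rpow_of_exponent_le hε1 (le_of_lt hα0)
  · push_neg at hε1
    apply le_of_forall_gt_imp_ge_of_dense
    intro c hc
    -- choose β < α with ε ^ β < c
    have hcont : ContinuousAt (fun x : ℝ => ε ^ x) (alphaEll R z) :=
      Real.continuousAt_const_rpow (ne_of_gt hε)
    have hev : {x : ℝ | ε ^ x < c} ∈ nhds (alphaEll R z) := hcont (Iio_mem_nhds hc)
    obtain ⟨d, hd0, hball⟩ := Metric.mem_nhds_iff.mp hev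
    set β : ℝ := alphaEll R z - d / 2 with hβ
    have hβα : β < alphaEll R z := by rw [hβ]; linarith
    have hβc : ε ^ β < c := by
      apply hball
      rw [Metric.mem_ball, Real.dist_eq, hβ]
      rw [abs_of_nonpos (by linarith)]
      linarith
    have hβ1 : β < 1 := by linarith
    have h1β : 0 < 1 - β := by linarith
    -- choose R'
    set lR' : ℝ := max ((ls + lR) / 2) (ls / (1 - β)) with hlR'
    have hlR'1 : ls < lR' := lt_of_lt_of_le (by linarith) (le_max_left _ _)
    have hlslt : ls / (1 - β) < lR := by
      rw [div_lt_iff₀ h1β]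
      have : ls / lR < 1 - β := by
        have : β < 1 - ls / lR := by rw [← halpha]; exact hβα
        linarith
      calc ls = ls / lR * lR := by field_simp
        _ < (1 - β) * lR := by
            apply mul_lt_mul_of_pos_right this hlR0
        _ = lR * (1 - β) := by ring
    have hlR'2 : lR' < lR := max_lt (by linarith) hlslt
    set R' : ℝ := Real.exp lR' with hR'def
    have hlogR' : Real.log R' = lR' := Real.log_exp _
    have hsR' : s < R' := by
      calc s = Real.exp ls := (Real.exp_log hs0).symm
        _ < Real.exp lR' := Real.exp_lt_exp.mpr hlR'1
    have hR'R : R' < R := by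
      calc R' = Real.exp lR' := rfl
        _ < Real.exp lR := Real.exp_lt_exp.mpr hlR'2
        _ = R := Real.exp_log (by linarith)
    have hβe : β ≤ 1 - ls / lR' := by
      have h2 : ls / (1 - β) ≤ lR' := le_max_right _ _
      have hlR'0 : 0 < lR' := by linarith
      have : ls ≤ (1 - β) * lR' := by
        rw [div_le_iff₀ h1β] at h2
        linarith [h2]
      have : ls / lR' ≤ 1 - β := by
        rw [div_le_iff₀ hlR'0]
        linarith
      linarith
    -- choose δ
    have hcont2 : ContinuousAt (fun x : ℝ => x ^ β) ε :=
      Real.continuousAt_rpow_const ε β (Or.inl (ne_of_gt hε))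
    have hev2 : {x : ℝ | x ^ β < c} ∩ Iio 1 ∈ nhds ε := by
      apply Filter.inter_mem
      · exact hcont2 (Iio_mem_nhds hβc)
      · exact Iio_mem_nhds hε1
    obtain ⟨d₂, hd₂0, hball₂⟩ := Metric.mem_nhds_iff.mp hev2
    set δ : ℝ := d₂ / 2 with hδdef
    have hδ0 : 0 < δ := by rw [hδdef]; linarith
    have hmem : ε + δ ∈ {x : ℝ | x ^ β < c} ∩ Iio 1 := by
      apply hball₂
      rw [Metric.mem_ball, Real.dist_eq, show ε + δ - ε = δ by ring, abs_of_pos hδ0, hδdef]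
      linarith
    have hεδβ : (ε + δ) ^ β < c := hmem.1
    have hεδ1 : ε + δ < 1 := hmem.2
    -- circle bound near the slit
    obtain ⟨η, hη0, hηR, hcirc⟩ := near_circle_bound hR F hFd hFε hδ0
    set r : ℝ := min (1 + η) ((1 + s) / 2) with hr
    have hr1 : 1 < r := lt_min (by linarith) (by linarith)
    have hrs : r ≤ s := le_trans (min_le_right _ _) (by linarith)
    have hrη : r ≤ 1 + η := min_le_left _ _
    have hrR' : r < R' := by linarith
    have hM : ∀ ζ : ℂ, ‖ζ‖ = r → ‖F ((ζ + ζ⁻¹) / 2)‖ ≤ ε + δ := by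
      intro ζ hζ
      apply hcirc ζ (by rw [hζ]; linarith) (by rw [hζ]; linarith)
    have hmain := hadamard_ann F hFd hF1 hr1 hR'R hrR' (le_trans (le_refl _) hrs)
      (le_of_lt hsR') hM
    rw [hJz] at hmain
    rw [← hs, hlogR'] at hmain
    set t : ℝ := (ls - Real.log r) / (lR' - Real.log r) with ht
    rw [Real.one_rpow, mul_one] at hmain
    -- exponent comparison
    have hlr0 : 0 < Real.log r := Real.log_pos hr1
    have hlrls : Real.log r ≤ ls := Real.log_le_log (by linarith) hrs
    have hden : 0 < lR' - Real.log r := by linarith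
    have htle : t ≤ ls / lR' := by
      rw [ht, div_le_div_iff₀ hden (by linarith)]
      nlinarith
    have hβt : β ≤ 1 - t := by
      have h1 : (ls : ℝ) / lR' ≤ 1 - β := by linarith [hβe]
      have h2 : t ≤ 1 - β := le_trans htle h1
      linarith [h2]
    calc ‖F z‖ ≤ (ε + δ) ^ (1 - t) := hmain
      _ ≤ (ε + δ) ^ β := Real.rpow_le_rpow_of_exponent_ge (by linarith) (le_of_lt hεδ1) hβt
      _ ≤ c := le_of_lt hεδβ
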